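/- Let u : S × S → ℝ and suppose for each α ≥ 0 we have functions u^α : S × S → ℝ satisfying the 'resolvent derivative' identity ∫_S u^α(y,x) u^α(x,z) dm(x) = -d/dα u^α(y,z). Then for fixed points z_1,…,z_k ∈ S, summing over all permutations π of {1,…,k}, ∑_{π ∈ P_k} ∫_S u^α(x, z_{π(1)}) u^α(z_{π(1)}, z_{π(2)}) ⋯ u^α(z_{π(k-1)}, z_{π(k)}) u^α(z_{π(k)}, x) dm(x) = -∑_{π ∈ P_{k-1}} d/dα [ u^α(z_k, z_{π(1)}) u^α(z_{π(1)}, z_{π(2)}) ⋯ u^α(z_{π(k-1)}, z_k) ], where P_{k-1} permutes {1,…,k-1} and z_k is held fixed as the base point of the cycle. -/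

import Mathlib

open MeasureTheory

/-- Product of a kernel `u` over the consecutive pairs of a list of points. -/
def chainProd {S : Type*} (u : S → S → ℝ) : List S → ℝ
  | [] => 1
  | [_] => 1
  | a :: b :: l => u a b * chainProd u (b :: l)

section Aux

variable {S : Type*}

lemma chainProd_cons (u : S → S → ℝ) (a : S) (l : List S) (h : l ≠ []) :
    chainProd u (a :: l) = u a (l.head h) * chainProd u l := by
  cases l with
  | nil => exact absurd rfl h
  | cons b t => rfl

lemma chainProd_append (u : S → S → ℝ) :
    ∀ (l : List S) (h : l ≠ []) (y : S),
      chainProd u (l ++ [y]) = chainProd u l * u (l.getLast h) y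
  | [a], _, y => by simp [chainProd]
  | a :: b :: t, _, y => by
    have IH := chainProd_append u (b :: t) (by simp) y
    show u a b * chainProd u ((b :: t) ++ [y]) = _
    rw [IH]
    conv_rhs => rw [List.getLast_cons (by simp : (b :: t) ≠ []),
      show chainProd u (a :: b :: t) = u a b * chainProd u (b :: t) from rfl]
    ring

lemma chainProd_ofFn (u : S → S → ℝ) :
    ∀ (k : ℕ) (c : Fin (k + 1) → S),
      chainProd u (List.ofFn c) = ∏ i : Fin k, u (c i.castSucc) (c i.succ)
  | 0, c => by simp [List.ofFn_succ, chainProd]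
  | (k + 1), c => by
    have IH := chainProd_ofFn u k (fun i => c i.succ)
    rw [List.ofFn_succ]
    rw [List.ofFn_succ (f := fun i : Fin (k + 1) => c i.succ)]
    show u (c 0) (c (0 : Fin (k+1)).succ) *
        chainProd u ((fun i : Fin (k+1) => c i.succ) 0 :: List.ofFn fun i : Fin k => c i.succ.succ) = _
    rw [← List.ofFn_succ (f := fun i : Fin (k + 1) => c i.succ), IH, Fin.prod_univ_succ]
    simp [Fin.succ_castSucc, -Fin.castSucc_succ]

lemma cons_ofFn_append (x y : S) {k : ℕ} (c : Fin k → S) :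
    x :: (List.ofFn c ++ [y]) =
      List.ofFn (Fin.cons x (Fin.snoc c y) : Fin (k + 2) → S) := by
  rw [List.ofFn_succ]
  simp only [Fin.cons_zero, Fin.cons_succ]
  congr 1
  rw [List.ofFn_succ']
  simp [Fin.snoc_castSucc, Fin.snoc_last, List.concat_eq_append]

lemma chainProd_sandwich (u : S → S → ℝ) (x : S) {k : ℕ} (c : Fin (k + 1) → S) :
    chainProd u (x :: (List.ofFn c ++ [x])) =
      chainProd u (List.ofFn c) * (u (c (Fin.last k)) x * u x (c 0)) := by
  have hne : (List.ofFn c) ≠ [] := by simp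
  have hne2 : (List.ofFn c ++ [x]) ≠ [] := by simp
  rw [chainProd_cons u x _ hne2, chainProd_append u (List.ofFn c) hne x]
  have hhead : (List.ofFn c ++ [x]).head hne2 = c 0 := by
    rw [List.head_append_of_ne_nil hne, List.head_ofFn]
    exact congrArg c (by ext; simp)
  have hlast : (List.ofFn c).getLast hne = c (Fin.last k) := by
    rw [List.getLast_ofFn]
    exact congrArg c (by ext; simp [Fin.last])
  rw [hhead, hlast]
  ring

end Aux

section PermAux

variable {n : ℕ}

/-- The permutation of `Fin (n+1)` sending `0 ↦ last n` and `j.succ ↦ (τ j).castSucc`. -/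
def chiPerm (τ : Equiv.Perm (Fin n)) : Equiv.Perm (Fin (n + 1)) :=
  (finSuccEquiv n).trans ((Equiv.optionCongr τ).trans (finSuccEquiv' (Fin.last n)).symm)

@[simp] lemma chiPerm_zero (τ : Equiv.Perm (Fin n)) : chiPerm τ 0 = Fin.last n := by
  simp [chiPerm]

@[simp] lemma chiPerm_succ (τ : Equiv.Perm (Fin n)) (j : Fin n) :
    chiPerm τ j.succ = (τ j).castSucc := by
  simp [chiPerm, finSuccEquiv'_symm_some, Fin.succAbove_last]

/-- The combined rotation-and-relabel permutation. -/
def bigPerm (q : Equiv.Perm (Fin n) × Fin (n + 1)) : Equiv.Perm (Fin (n + 1)) :=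
  (Equiv.subRight (Fin.last n - q.2)).trans (chiPerm q.1)

lemma bigPerm_apply (q : Equiv.Perm (Fin n) × Fin (n + 1)) (r : Fin (n + 1)) :
    bigPerm q r = chiPerm q.1 (r - (Fin.last n - q.2)) := rfl

lemma bigPerm_apply_add (q : Equiv.Perm (Fin n) × Fin (n + 1)) (r : Fin (n + 1)) :
    bigPerm q (r + (Fin.last n - q.2)) = chiPerm q.1 r := by
  rw [bigPerm_apply, add_sub_cancel_right]

lemma bigPerm_bijective : Function.Bijective (bigPerm (n := n)) := by
  rw [Fintype.bijective_iff_injective_and_card]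
  constructor
  · rintro ⟨τ, i⟩ ⟨τ', i'⟩ h
    have hp : ∀ r, chiPerm τ (r - (Fin.last n - i)) = chiPerm τ' (r - (Fin.last n - i')) := by
      intro r
      rw [← bigPerm_apply (⟨τ, i⟩ : _ × _), ← bigPerm_apply (⟨τ', i'⟩ : _ × _), h]
    -- first, the shifts coincide
    have h1 : chiPerm τ' ((Fin.last n - i) - (Fin.last n - i')) = Fin.last n := by
      have h0 := hp (Fin.last n - i)
      rw [sub_self, chiPerm_zero] at h0
      exact h0.symm
    have h2 : (Fin.last n - i) - (Fin.last n - i') = 0 := by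
      by_contra hne
      obtain ⟨j, hj⟩ := Fin.exists_succ_eq.mpr hne
      rw [← hj, chiPerm_succ] at h1
      exact absurd h1 (Fin.castSucc_lt_last _).ne
    have hii : i = i' := by
      have h3 := sub_eq_zero.mp h2
      rw [← sub_sub_cancel (Fin.last n) i, h3, sub_sub_cancel]
    subst hii
    have hτ : τ = τ' := by
      apply Equiv.ext
      intro j
      have h4 := hp (j.succ + (Fin.last n - i))
      rw [add_sub_cancel_right, chiPerm_succ, chiPerm_succ] at h4
      exact Fin.castSucc_injective n h4
    rw [hτ]
  · simp [Fintype.card_perm, Nat.factorial_succ, Nat.mul_comm]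

end PermAux

section Key

variable {S : Type*} {n : ℕ}

/-- The cyclic word through the base point `z (last n)`. -/
def Dword (z : Fin (n + 1) → S) (τ : Equiv.Perm (Fin n)) : Fin (n + 2) → S :=
  Fin.cons (z (Fin.last n)) (Fin.snoc (fun j => z ((τ j).castSucc)) (z (Fin.last n)))

lemma Dword_castSucc (z : Fin (n + 1) → S) (τ : Equiv.Perm (Fin n)) (i : Fin (n + 1))
    (r : Fin (n + 1)) :
    Dword z τ r.castSucc = z (bigPerm (τ, i) (r + (Fin.last n - i))) := by
  rw [bigPerm_apply_add]
  refine Fin.cases ?_ ?_ r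
  · simp [Dword]
  · intro j
    rw [chiPerm_succ, ← Fin.succ_castSucc]
    simp [Dword]

lemma Dword_succ (z : Fin (n + 1) → S) (τ : Equiv.Perm (Fin n)) (i : Fin (n + 1))
    (r : Fin (n + 1)) :
    Dword z τ r.succ = z (bigPerm (τ, i) (r + (Fin.last n - i) + 1)) := by
  refine Fin.lastCases ?_ ?_ r
  · have h1 : Fin.last n + (Fin.last n - i) + 1 = 0 + (Fin.last n - i) := by
      rw [add_right_comm, Fin.last_add_one]
    rw [h1, bigPerm_apply_add, chiPerm_zero]
    show Fin.cons _ _ ((Fin.last n).succ) = _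
    rw [Fin.cons_succ, Fin.snoc_last]
  · intro j
    have h1 : j.castSucc + (Fin.last n - i) + 1 = j.succ + (Fin.last n - i) := by
      rw [add_right_comm, Fin.coeSucc_eq_succ]
    rw [h1, Fin.succ_castSucc, Dword_castSucc z τ i j.succ]

lemma prod_erase_last {M : Type*} [CommMonoid M] (g : Fin (n + 1) → M) :
    ∏ j ∈ Finset.univ.erase (Fin.last n), g j = ∏ j : Fin n, g j.castSucc := by
  have h : (Finset.univ.erase (Fin.last n) : Finset (Fin (n + 1)))
      = Finset.Iio (Fin.last n) := by
    ext q
    simp only [Finset.mem_erase, Finset.mem_univ, and_true, Finset.mem_Iio]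
    exact (Fin.lt_last_iff_ne_last).symm
  rw [h, Fin.Iio_last_eq_map, Finset.prod_map]
  rfl

end Key

theorem cyclic_sum_eq_neg_deriv {S : Type*} [MeasurableSpace S] (m : Measure S)
    (n : ℕ) (u : ℝ → S → S → ℝ) (z : Fin (n + 1) → S) (α : ℝ)
    (hres : ∀ (β : ℝ) (y w : S),
      (∫ x, u β y x * u β x w ∂m) = - deriv (fun a => u a y w) β)
    (hdiff : ∀ y w : S, DifferentiableAt ℝ (fun a => u a y w) α)
    (hint : ∀ (β : ℝ) (σ : Equiv.Perm (Fin (n + 1))),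
      Integrable (fun x =>
        chainProd (u β) (x :: (List.ofFn (fun j => z (σ j)) ++ [x]))) m) :
    ∑ σ : Equiv.Perm (Fin (n + 1)),
        ∫ x, chainProd (u α) (x :: (List.ofFn (fun j => z (σ j)) ++ [x])) ∂m
      = - ∑ σ : Equiv.Perm (Fin n),
          deriv (fun a => chainProd (u a)
            (z (Fin.last n) ::
              (List.ofFn (fun j => z ((σ j).castSucc)) ++ [z (Fin.last n)]))) α := by
  classical
  set T : Equiv.Perm (Fin (n + 1)) → ℝ := fun σ =>
    (∏ j : Fin n, u α (z (σ j.castSucc)) (z (σ j.succ))) *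
      (-(deriv (fun a => u a (z (σ (Fin.last n))) (z (σ 0))) α)) with hT
  -- Step A: compute each integral
  have hA : ∀ σ : Equiv.Perm (Fin (n + 1)),
      (∫ x, chainProd (u α) (x :: (List.ofFn (fun j => z (σ j)) ++ [x])) ∂m) = T σ := by
    intro σ
    have h1 : ∀ x : S, chainProd (u α) (x :: (List.ofFn (fun j => z (σ j)) ++ [x]))
        = chainProd (u α) (List.ofFn fun j => z (σ j)) *
            (u α (z (σ (Fin.last n))) x * u α x (z (σ 0))) := fun x =>
      chainProd_sandwich (u α) x (fun j => z (σ j))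
    simp only [h1]
    rw [MeasureTheory.integral_const_mul, hres α (z (σ (Fin.last n))) (z (σ 0)),
      chainProd_ofFn]
  -- Step B: product rule on the right-hand side
  have hB : ∀ τ : Equiv.Perm (Fin n),
      deriv (fun a => chainProd (u a)
        (z (Fin.last n) :: (List.ofFn (fun j => z ((τ j).castSucc)) ++ [z (Fin.last n)]))) α
      = ∑ i : Fin (n + 1), (∏ j ∈ Finset.univ.erase i,
            u α (Dword z τ j.castSucc) (Dword z τ j.succ)) *
          deriv (fun a => u a (Dword z τ i.castSucc) (Dword z τ i.succ)) α := by
    intro τ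
    have hfun : (fun a => chainProd (u a)
        (z (Fin.last n) :: (List.ofFn (fun j => z ((τ j).castSucc)) ++ [z (Fin.last n)])))
        = fun a => ∏ i : Fin (n + 1), u a (Dword z τ i.castSucc) (Dword z τ i.succ) := by
      funext a
      rw [cons_ofFn_append, chainProd_ofFn]
      rfl
    rw [hfun]
    have hder :
        HasDerivAt (fun a => ∏ i : Fin (n + 1), u a (Dword z τ i.castSucc) (Dword z τ i.succ))
          (∑ i : Fin (n + 1), (∏ j ∈ Finset.univ.erase i,
              u α (Dword z τ j.castSucc) (Dword z τ j.succ)) •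
            deriv (fun a => u a (Dword z τ i.castSucc) (Dword z τ i.succ)) α) α :=
      HasDerivAt.fun_finsetProd (fun i _ => (hdiff _ _).hasDerivAt)
    simpa [smul_eq_mul] using hder.deriv
  -- Step C: per-term identification via the bijection
  have hC : ∀ (τ : Equiv.Perm (Fin n)) (i : Fin (n + 1)),
      T (bigPerm (τ, i)) =
        -((∏ j ∈ Finset.univ.erase i,
            u α (Dword z τ j.castSucc) (Dword z τ j.succ)) *
          deriv (fun a => u a (Dword z τ i.castSucc) (Dword z τ i.succ)) α) := by
    intro τ i
    have hip : i + (Fin.last n - i) = Fin.last n := by rw [← add_sub_assoc, add_sub_cancel_left]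
    have hmap : (Finset.univ.erase i).map (Equiv.addRight (Fin.last n - i)).toEmbedding
        = Finset.univ.erase (Fin.last n) := by
      have heq : (Equiv.addRight (Fin.last n - i)).toEmbedding i = Fin.last n := hip
      rw [Finset.map_erase, Finset.map_univ_equiv, heq]
    have hprod : (∏ j ∈ Finset.univ.erase i,
          u α (Dword z τ j.castSucc) (Dword z τ j.succ))
        = ∏ j : Fin n, u α (z (bigPerm (τ, i) j.castSucc)) (z (bigPerm (τ, i) j.succ)) := by
      have e1 : (∏ j ∈ Finset.univ.erase i,
            u α (Dword z τ j.castSucc) (Dword z τ j.succ))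
          = ∏ r ∈ Finset.univ.erase (Fin.last n),
              u α (z (bigPerm (τ, i) r)) (z (bigPerm (τ, i) (r + 1))) := by
        rw [← hmap, Finset.prod_map]
        refine Finset.prod_congr rfl fun j _ => ?_
        rw [Dword_castSucc z τ i j, Dword_succ z τ i j]
        rfl
      rw [e1, prod_erase_last]
      refine Finset.prod_congr rfl fun j _ => ?_
      rw [Fin.coeSucc_eq_succ]
    have hder : (fun a => u a (Dword z τ i.castSucc) (Dword z τ i.succ))
        = fun a => u a (z (bigPerm (τ, i) (Fin.last n))) (z (bigPerm (τ, i) 0)) := by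
      rw [Dword_castSucc z τ i i, Dword_succ z τ i i, hip, Fin.last_add_one]
    rw [hprod, hder, hT]
    ring
  -- Assemble
  calc (∑ σ : Equiv.Perm (Fin (n + 1)),
        ∫ x, chainProd (u α) (x :: (List.ofFn (fun j => z (σ j)) ++ [x])) ∂m)
      = ∑ σ : Equiv.Perm (Fin (n + 1)), T σ :=
        Finset.sum_congr rfl fun σ _ => hA σ
    _ = ∑ q : Equiv.Perm (Fin n) × Fin (n + 1), T (bigPerm q) :=
        (Equiv.sum_comp (Equiv.ofBijective bigPerm bigPerm_bijective) T).symm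
    _ = ∑ τ : Equiv.Perm (Fin n), ∑ i : Fin (n + 1),
          -((∏ j ∈ Finset.univ.erase i,
              u α (Dword z τ j.castSucc) (Dword z τ j.succ)) *
            deriv (fun a => u a (Dword z τ i.castSucc) (Dword z τ i.succ)) α) := by
        rw [Fintype.sum_prod_type]
        exact Finset.sum_congr rfl fun τ _ => Finset.sum_congr rfl fun i _ => hC τ i
    _ = - ∑ σ : Equiv.Perm (Fin n),
          deriv (fun a => chainProd (u a)
            (z (Fin.last n) ::
              (List.ofFn (fun j => z ((σ j).castSucc)) ++ [z (Fin.last n)]))) α := by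
        rw [← Finset.sum_neg_distrib]
        refine Finset.sum_congr rfl fun τ _ => ?_
        rw [hB τ, ← Finset.sum_neg_distrib]
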